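/- arXiv:0807.3593 — 3 statements merged into one kernel-verified Lean document; each statement's English description precedes it below -/
import Mathlib

section
/- Let T, U, V, W₁, W₂, Y₁, Y₂ be random variables on a common probability space taking values in finite sets. If I(V;Y₂|(T,W₂)) = I(V;Y₂|W₂), I(W₁;Y₂|(T,V,W₂)) = I(W₂;Y₁|(T,V,W₁)), and I(U;Y₁|(T,V,W₁)) = I(U;Y₁|W₁), then I(T;Y₂|W₂) + I(U;Y₁|W₁) + I(V;Y₂|W₂) ≤ I(U;Y₁|(T,V,W₁,W₂)) + I((T,V,W₁);Y₂|W₂). -/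
open MeasureTheory Real

/-- Shannon entropy (in nats) of a random variable taking values in a finite set. -/
noncomputable def entropy {Ω : Type*} [MeasurableSpace Ω] (μ : Measure Ω)
    {S : Type*} [Fintype S] (X : Ω → S) : ℝ :=
  ∑ x : S, Real.negMulLog (μ (X ⁻¹' {x})).toReal

/-- Mutual information `I(X;Y) = H(X) + H(Y) - H(X,Y)`. -/
noncomputable def mutualInfo {Ω : Type*} [MeasurableSpace Ω] (μ : Measure Ω)
    {S T : Type*} [Fintype S] [Fintype T] (X : Ω → S) (Y : Ω → T) : ℝ :=
  entropy μ X + entropy μ Y - entropy μ (fun ω => (X ω, Y ω))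

/-- Conditional mutual information `I(X;Y|Z) = H(X,Z) + H(Y,Z) - H(X,Y,Z) - H(Z)`. -/
noncomputable def condMutualInfo {Ω : Type*} [MeasurableSpace Ω] (μ : Measure Ω)
    {S T R : Type*} [Fintype S] [Fintype T] [Fintype R]
    (X : Ω → S) (Y : Ω → T) (Z : Ω → R) : ℝ :=
  entropy μ (fun ω => (X ω, Z ω)) + entropy μ (fun ω => (Y ω, Z ω))
    - entropy μ (fun ω => (X ω, Y ω, Z ω)) - entropy μ Z

lemma entropy_congr {Ω : Type*} [MeasurableSpace Ω] (μ : Measure Ω)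
    {S S' : Type*} [Fintype S] [Fintype S'] (f : S → S') (g : S' → S)
    (hgf : Function.LeftInverse g f) (X : Ω → S) :
    entropy μ (fun ω => f (X ω)) = entropy μ X := by
  classical
  have hf : Function.Injective f := hgf.injective
  unfold entropy
  have h0 : ∀ y ∈ (Finset.univ : Finset S'), y ∉ Finset.univ.image f →
      negMulLog ((μ ((fun ω => f (X ω)) ⁻¹' {y})).toReal) = 0 := by
    intro y _ hy
    have he : (fun ω => f (X ω)) ⁻¹' {y} = ∅ := by
      ext ω
      simp only [Set.mem_preimage, Set.mem_singleton_iff, Set.mem_empty_iff_false, iff_false]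
      intro h
      exact hy (Finset.mem_image.mpr ⟨X ω, Finset.mem_univ _, h⟩)
    simp [he]
  rw [← Finset.sum_subset (Finset.subset_univ (Finset.univ.image f)) h0,
    Finset.sum_image (fun x _ y _ h => hf h)]
  refine Finset.sum_congr rfl fun x _ => ?_
  have hs : (fun ω => f (X ω)) ⁻¹' {f x} = X ⁻¹' {x} := by
    ext ω; simp [hf.eq_iff]
  rw [hs]

lemma pt {q a b c : ℝ} (hq : 0 ≤ q) (hqa : q ≤ a) (hqb : q ≤ b) (hc : 0 < c) :
    q - a * b / c ≤ q * (Real.log q + Real.log c - Real.log a - Real.log b) := by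
  rcases hq.eq_or_lt with h | h
  · have h0 : q = 0 := h.symm
    subst h0
    have hab : 0 ≤ a * b / c := div_nonneg (mul_nonneg hqa hqb) hc.le
    simp only [zero_mul, zero_sub]
    linarith
  · have ha : 0 < a := h.trans_le hqa
    have hb : 0 < b := h.trans_le hqb
    have harg : 0 < a * b / (q * c) := by positivity
    have hlog := Real.log_le_sub_one_of_pos harg
    have hexp : Real.log (a * b / (q * c)) =
        Real.log a + Real.log b - Real.log q - Real.log c := by
      rw [Real.log_div (by positivity) (by positivity), Real.log_mul ha.ne' hb.ne',
        Real.log_mul h.ne' hc.ne']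
      ring
    have e : q * (Real.log q + Real.log c - Real.log a - Real.log b)
        = -(q * Real.log (a * b / (q * c))) := by rw [hexp]; ring
    have hmul := mul_le_mul_of_nonneg_left hlog h.le
    have hqt : q * (a * b / (q * c)) = a * b / c := by
      field_simp
    rw [e]
    nlinarith [hmul, hqt]

lemma inner_ineq {S T : Type*} [Fintype S] [Fintype T] (q : S → T → ℝ)
    (hq : ∀ x y, 0 ≤ q x y) :
    ∑ x, ∑ y, negMulLog (q x y) + negMulLog (∑ x, ∑ y, q x y)
      ≤ ∑ x, negMulLog (∑ y, q x y) + ∑ y, negMulLog (∑ x, q x y) := by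
  classical
  by_cases hc : ∑ x, ∑ y, q x y = 0
  · have hq0 : ∀ x y, q x y = 0 := by
      intro x y
      have hx := (Finset.sum_eq_zero_iff_of_nonneg
        (fun x _ => Finset.sum_nonneg fun y _ => hq x y)).mp hc x (Finset.mem_univ x)
      exact (Finset.sum_eq_zero_iff_of_nonneg (fun y _ => hq x y)).mp hx y (Finset.mem_univ y)
    simp [hq0]
  · have hcpos : 0 < ∑ x, ∑ y, q x y :=
      lt_of_le_of_ne (Finset.sum_nonneg fun x _ => Finset.sum_nonneg fun y _ => hq x y)
        (Ne.symm hc)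
    set c := ∑ x, ∑ y, q x y with hcdef
    have hbc : ∑ y, ∑ x, q x y = c := Finset.sum_comm
    have key : ∀ x y, q x y - (∑ y', q x y') * (∑ x', q x' y) / c ≤
        q x y * (Real.log (q x y) + Real.log c - Real.log (∑ y', q x y')
          - Real.log (∑ x', q x' y)) := by
      intro x y
      refine pt (hq x y) ?_ ?_ hcpos
      · exact Finset.single_le_sum (fun y' _ => hq x y') (Finset.mem_univ y)
      · exact Finset.single_le_sum (fun x' _ => hq x' y) (Finset.mem_univ x)
    have hsum1 : ∑ x, ∑ y, (q x y - (∑ y', q x y') * (∑ x', q x' y) / c) ≤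
        ∑ x, ∑ y, q x y * (Real.log (q x y) + Real.log c - Real.log (∑ y', q x y')
          - Real.log (∑ x', q x' y)) :=
      Finset.sum_le_sum fun x _ => Finset.sum_le_sum fun y _ => key x y
    have h2 : ∑ x, ∑ y, ((∑ y', q x y') * (∑ x', q x' y) / c) = c := by
      calc ∑ x, ∑ y, ((∑ y', q x y') * (∑ x', q x' y) / c)
          = ∑ x, ((∑ y', q x y') * c / c) := by
            refine Finset.sum_congr rfl fun x _ => ?_
            rw [← Finset.sum_div, ← Finset.mul_sum, hbc]
        _ = ∑ x, (∑ y', q x y') := by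
            refine Finset.sum_congr rfl fun x _ => ?_
            rw [mul_div_assoc, div_self hcpos.ne', mul_one]
        _ = c := rfl
    have hsum2 : ∑ x, ∑ y, (q x y - (∑ y', q x y') * (∑ x', q x' y) / c) = 0 := by
      simp only [Finset.sum_sub_distrib]
      rw [h2]
      simp [hcdef]
    have eA : ∑ x, negMulLog (∑ y, q x y)
        = -∑ x, ∑ y, q x y * Real.log (∑ y', q x y') := by
      rw [← Finset.sum_neg_distrib]
      refine Finset.sum_congr rfl fun x _ => ?_
      rw [Real.negMulLog, neg_mul, Finset.sum_mul]
    have eB : ∑ y, negMulLog (∑ x, q x y)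
        = -∑ x, ∑ y, q x y * Real.log (∑ x', q x' y) := by
      have eB' : ∑ y, negMulLog (∑ x, q x y)
          = -∑ y, ∑ x, q x y * Real.log (∑ x', q x' y) := by
        rw [← Finset.sum_neg_distrib]
        refine Finset.sum_congr rfl fun y _ => ?_
        rw [Real.negMulLog, neg_mul, Finset.sum_mul]
      rw [eB']
      congr 1
      exact Finset.sum_comm
    have eC : negMulLog c = -∑ x, ∑ y, q x y * Real.log c := by
      rw [Real.negMulLog, neg_mul, neg_inj]
      calc c * Real.log c = ∑ x, (∑ y, q x y) * Real.log c := by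
            rw [← Finset.sum_mul, ← hcdef]
        _ = ∑ x, ∑ y, q x y * Real.log c :=
            Finset.sum_congr rfl fun x _ => Finset.sum_mul ..
    have eQ : ∑ x, ∑ y, negMulLog (q x y) = -∑ x, ∑ y, q x y * Real.log (q x y) := by
      simp [Real.negMulLog, Finset.sum_neg_distrib]
    have hdist : ∑ x, ∑ y, q x y * (Real.log (q x y) + Real.log c
          - Real.log (∑ y', q x y') - Real.log (∑ x', q x' y))
        = (∑ x, ∑ y, q x y * Real.log (q x y)) + (∑ x, ∑ y, q x y * Real.log c)
          - (∑ x, ∑ y, q x y * Real.log (∑ y', q x y'))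
          - (∑ x, ∑ y, q x y * Real.log (∑ x', q x' y)) := by
      simp [mul_add, mul_sub, Finset.sum_add_distrib, Finset.sum_sub_distrib]
    linarith [hsum1, hsum2, eA, eB, eC, eQ, hdist]

lemma fiber_sum {Ω : Type*} [MeasurableSpace Ω] (μ : Measure Ω) [IsFiniteMeasure μ]
    {T : Type*} [Fintype T] [MeasurableSpace T] [MeasurableSingletonClass T]
    {Y : Ω → T} (hY : Measurable Y) {s : Set Ω} (hs : MeasurableSet s) :
    (μ s).toReal = ∑ y : T, (μ (s ∩ Y ⁻¹' {y})).toReal := by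
  classical
  have hcover : s = ⋃ y ∈ (Finset.univ : Finset T), s ∩ Y ⁻¹' {y} := by
    ext ω; simp
  have hdisj : (↑(Finset.univ : Finset T) : Set T).PairwiseDisjoint
      (fun y => s ∩ Y ⁻¹' {y}) := by
    intro y _ y' _ hne
    apply Set.disjoint_left.mpr
    rintro ω ⟨_, h1⟩ ⟨_, h2⟩
    have h1' : Y ω = y := h1
    have h2' : Y ω = y' := h2
    exact hne (h1'.symm.trans h2')
  conv_lhs => rw [hcover]
  rw [measure_biUnion_finset hdisj
    (fun y _ => hs.inter (hY (measurableSet_singleton y))),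
    ENNReal.toReal_sum (fun y _ => measure_ne_top μ _)]

lemma cmi_nonneg {Ω : Type*} [MeasurableSpace Ω] (μ : Measure Ω) [IsProbabilityMeasure μ]
    {S T R : Type*} [Fintype S] [MeasurableSpace S] [MeasurableSingletonClass S]
    [Fintype T] [MeasurableSpace T] [MeasurableSingletonClass T]
    [Fintype R] [MeasurableSpace R] [MeasurableSingletonClass R]
    (X : Ω → S) (Y : Ω → T) (Z : Ω → R)
    (hX : Measurable X) (hY : Measurable Y) (hZ : Measurable Z) :
    0 ≤ condMutualInfo μ X Y Z := by
  classical
  set q : S → T → R → ℝ :=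
    fun x y z => (μ (X ⁻¹' {x} ∩ Y ⁻¹' {y} ∩ Z ⁻¹' {z})).toReal with hqdef
  have hq : ∀ x y z, 0 ≤ q x y z := fun _ _ _ => ENNReal.toReal_nonneg
  have hXZ : entropy μ (fun ω => (X ω, Z ω)) = ∑ x : S, ∑ z : R, negMulLog (∑ y : T, q x y z) := by
    unfold entropy
    rw [Fintype.sum_prod_type]
    refine Finset.sum_congr rfl fun x _ => Finset.sum_congr rfl fun z _ => ?_
    have hset : (fun ω => (X ω, Z ω)) ⁻¹' {(x, z)} = X ⁻¹' {x} ∩ Z ⁻¹' {z} := by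
      ext ω; simp [Prod.ext_iff]
    rw [hset, fiber_sum μ hY ((hX (measurableSet_singleton x)).inter (hZ (measurableSet_singleton z)))]
    congr 1
    refine Finset.sum_congr rfl fun y _ => ?_
    have : X ⁻¹' {x} ∩ Z ⁻¹' {z} ∩ Y ⁻¹' {y} = X ⁻¹' {x} ∩ Y ⁻¹' {y} ∩ Z ⁻¹' {z} := by
      ext ω
      simp only [Set.mem_inter_iff, Set.mem_preimage, Set.mem_singleton_iff]
      tauto
    rw [this]
  have hYZe : entropy μ (fun ω => (Y ω, Z ω)) = ∑ y : T, ∑ z : R, negMulLog (∑ x : S, q x y z) := by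
    unfold entropy
    rw [Fintype.sum_prod_type]
    refine Finset.sum_congr rfl fun y _ => Finset.sum_congr rfl fun z _ => ?_
    have hset : (fun ω => (Y ω, Z ω)) ⁻¹' {(y, z)} = Y ⁻¹' {y} ∩ Z ⁻¹' {z} := by
      ext ω; simp [Prod.ext_iff]
    rw [hset, fiber_sum μ hX ((hY (measurableSet_singleton y)).inter (hZ (measurableSet_singleton z)))]
    congr 1
    refine Finset.sum_congr rfl fun x _ => ?_
    have : Y ⁻¹' {y} ∩ Z ⁻¹' {z} ∩ X ⁻¹' {x} = X ⁻¹' {x} ∩ Y ⁻¹' {y} ∩ Z ⁻¹' {z} := by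
      ext ω
      simp only [Set.mem_inter_iff, Set.mem_preimage, Set.mem_singleton_iff]
      tauto
    rw [this]
  have hZe : entropy μ Z = ∑ z : R, negMulLog (∑ x : S, ∑ y : T, q x y z) := by
    unfold entropy
    refine Finset.sum_congr rfl fun z _ => ?_
    rw [fiber_sum μ hX (hZ (measurableSet_singleton z))]
    congr 1
    refine Finset.sum_congr rfl fun x _ => ?_
    rw [fiber_sum μ hY ((hZ (measurableSet_singleton z)).inter (hX (measurableSet_singleton x)))]
    refine Finset.sum_congr rfl fun y _ => ?_
    have : Z ⁻¹' {z} ∩ X ⁻¹' {x} ∩ Y ⁻¹' {y} = X ⁻¹' {x} ∩ Y ⁻¹' {y} ∩ Z ⁻¹' {z} := by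
      ext ω
      simp only [Set.mem_inter_iff, Set.mem_preimage, Set.mem_singleton_iff]
      tauto
    rw [this]
  have hXYZe : entropy μ (fun ω => (X ω, Y ω, Z ω)) = ∑ x : S, ∑ y : T, ∑ z : R, negMulLog (q x y z) := by
    unfold entropy
    rw [Fintype.sum_prod_type]
    refine Finset.sum_congr rfl fun x _ => ?_
    rw [Fintype.sum_prod_type]
    refine Finset.sum_congr rfl fun y _ => Finset.sum_congr rfl fun z _ => ?_
    have hset : (fun ω => (X ω, Y ω, Z ω)) ⁻¹' {(x, y, z)}
        = X ⁻¹' {x} ∩ Y ⁻¹' {y} ∩ Z ⁻¹' {z} := by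
      ext ω
      simp only [Set.mem_preimage, Set.mem_singleton_iff, Prod.ext_iff,
        Set.mem_inter_iff, and_assoc]
    rw [hset]
  have hmain : ∀ z : R,
      ∑ x, ∑ y, negMulLog (q x y z) + negMulLog (∑ x, ∑ y, q x y z)
        ≤ ∑ x, negMulLog (∑ y, q x y z) + ∑ y, negMulLog (∑ x, q x y z) :=
    fun z => inner_ineq (fun x y => q x y z) (fun x y => hq x y z)
  have hsum : (∑ z : R, ∑ x : S, ∑ y : T, negMulLog (q x y z))
      + ∑ z : R, negMulLog (∑ x : S, ∑ y : T, q x y z)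
      ≤ (∑ z : R, ∑ x : S, negMulLog (∑ y : T, q x y z))
        + ∑ z : R, ∑ y : T, negMulLog (∑ x : S, q x y z) := by
    rw [← Finset.sum_add_distrib, ← Finset.sum_add_distrib]
    exact Finset.sum_le_sum fun z _ => hmain z
  have r1 : ∑ x : S, ∑ y : T, ∑ z : R, negMulLog (q x y z)
      = ∑ z : R, ∑ x : S, ∑ y : T, negMulLog (q x y z) := by
    calc ∑ x : S, ∑ y : T, ∑ z : R, negMulLog (q x y z)
        = ∑ x : S, ∑ z : R, ∑ y : T, negMulLog (q x y z) :=
          Finset.sum_congr rfl fun _ _ => Finset.sum_comm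
      _ = ∑ z : R, ∑ x : S, ∑ y : T, negMulLog (q x y z) := Finset.sum_comm
  have r2 : ∑ x : S, ∑ z : R, negMulLog (∑ y : T, q x y z)
      = ∑ z : R, ∑ x : S, negMulLog (∑ y : T, q x y z) := Finset.sum_comm
  have r3 : ∑ y : T, ∑ z : R, negMulLog (∑ x : S, q x y z)
      = ∑ z : R, ∑ y : T, negMulLog (∑ x : S, q x y z) := Finset.sum_comm
  unfold condMutualInfo
  rw [hXZ, hYZe, hXYZe, hZe]
  linarith [hsum, r1, r2, r3]

set_option maxHeartbeats 1000000 in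
theorem stmt_11
    {Ω : Type*} [MeasurableSpace Ω] (μ : Measure Ω) [IsProbabilityMeasure μ]
    {ST SU SV SW₁ SW₂ SY₁ SY₂ : Type*}
    [Fintype ST] [MeasurableSpace ST] [MeasurableSingletonClass ST] [Fintype SU] [MeasurableSpace SU] [MeasurableSingletonClass SU] [Fintype SV] [MeasurableSpace SV] [MeasurableSingletonClass SV] [Fintype SW₁] [MeasurableSpace SW₁] [MeasurableSingletonClass SW₁] [Fintype SW₂] [MeasurableSpace SW₂] [MeasurableSingletonClass SW₂] [Fintype SY₁] [MeasurableSpace SY₁] [MeasurableSingletonClass SY₁] [Fintype SY₂] [MeasurableSpace SY₂] [MeasurableSingletonClass SY₂]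
    (T : Ω → ST) (U : Ω → SU) (V : Ω → SV) (W₁ : Ω → SW₁) (W₂ : Ω → SW₂) (Y₁ : Ω → SY₁) (Y₂ : Ω → SY₂)
    (hT : Measurable T) (hU : Measurable U) (hV : Measurable V) (hW₁ : Measurable W₁) (hW₂ : Measurable W₂) (hY₁ : Measurable Y₁) (hY₂ : Measurable Y₂)
    (h0 : condMutualInfo μ V Y₂ (fun ω => (T ω, W₂ ω)) = condMutualInfo μ V Y₂ W₂)
    (h1 : condMutualInfo μ W₁ Y₂ (fun ω => (T ω, V ω, W₂ ω)) = condMutualInfo μ W₂ Y₁ (fun ω => (T ω, V ω, W₁ ω)))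
    (h2 : condMutualInfo μ U Y₁ (fun ω => (T ω, V ω, W₁ ω)) = condMutualInfo μ U Y₁ W₁)
    : condMutualInfo μ T Y₂ W₂ + condMutualInfo μ U Y₁ W₁ + condMutualInfo μ V Y₂ W₂ ≤ condMutualInfo μ U Y₁ (fun ω => (T ω, V ω, W₁ ω, W₂ ω)) + condMutualInfo μ (fun ω => (T ω, V ω, W₁ ω)) Y₂ W₂ := by

  have n1 : 0 ≤ condMutualInfo μ W₂ Y₁ (fun ω => (U ω, T ω, V ω, W₁ ω)) :=
    cmi_nonneg μ W₂ Y₁ _ hW₂ hY₁ (hU.prodMk (hT.prodMk (hV.prodMk hW₁)))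
  -- permutation identities for chainA
  have e_a1 : entropy μ (fun ω => ((T ω, V ω, W₁ ω), W₂ ω))
      = entropy μ (fun ω => (W₁ ω, (T ω, (V ω, W₂ ω)))) :=
    entropy_congr μ
      (fun p : SW₁ × ST × SV × SW₂ => ((p.2.1, (p.2.2.1, p.1)), p.2.2.2))
      (fun p : (ST × SV × SW₁) × SW₂ => (p.1.2.2, (p.1.1, (p.1.2.1, p.2)))) (fun _ => rfl)
      (fun ω => (W₁ ω, (T ω, (V ω, W₂ ω))))
  have e_a2 : entropy μ (fun ω => ((T ω, V ω, W₁ ω), (Y₂ ω, W₂ ω)))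
      = entropy μ (fun ω => (W₁ ω, (Y₂ ω, (T ω, (V ω, W₂ ω))))) :=
    entropy_congr μ
      (fun p : SW₁ × SY₂ × ST × SV × SW₂ => ((p.2.2.1, (p.2.2.2.1, p.1)), (p.2.1, p.2.2.2.2)))
      (fun p : (ST × SV × SW₁) × SY₂ × SW₂ => (p.1.2.2, (p.2.1, (p.1.1, (p.1.2.1, p.2.2))))) (fun _ => rfl)
      (fun ω => (W₁ ω, (Y₂ ω, (T ω, (V ω, W₂ ω)))))
  have e_a3 : entropy μ (fun ω => (T ω, (Y₂ ω, W₂ ω)))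
      = entropy μ (fun ω => (Y₂ ω, (T ω, W₂ ω))) :=
    entropy_congr μ (fun p : SY₂ × ST × SW₂ => (p.2.1, (p.1, p.2.2)))
      (fun p : ST × SY₂ × SW₂ => (p.2.1, (p.1, p.2.2))) (fun _ => rfl)
      (fun ω => (Y₂ ω, (T ω, W₂ ω)))
  have e_a4 : entropy μ (fun ω => (V ω, (T ω, W₂ ω)))
      = entropy μ (fun ω => (T ω, (V ω, W₂ ω))) :=
    entropy_congr μ (fun p : ST × SV × SW₂ => (p.2.1, (p.1, p.2.2)))
      (fun p : SV × ST × SW₂ => (p.2.1, (p.1, p.2.2))) (fun _ => rfl)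
      (fun ω => (T ω, (V ω, W₂ ω)))
  have e_a5 : entropy μ (fun ω => (Y₂ ω, (T ω, (V ω, W₂ ω))))
      = entropy μ (fun ω => (V ω, (Y₂ ω, (T ω, W₂ ω)))) :=
    entropy_congr μ (fun p : SV × SY₂ × ST × SW₂ => (p.2.1, (p.2.2.1, (p.1, p.2.2.2))))
      (fun p : SY₂ × ST × SV × SW₂ => (p.2.2.1, (p.1, (p.2.1, p.2.2.2)))) (fun _ => rfl)
      (fun ω => (V ω, (Y₂ ω, (T ω, W₂ ω))))
  have chainA : condMutualInfo μ (fun ω => (T ω, V ω, W₁ ω)) Y₂ W₂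
      = condMutualInfo μ T Y₂ W₂ + condMutualInfo μ V Y₂ (fun ω => (T ω, W₂ ω))
        + condMutualInfo μ W₁ Y₂ (fun ω => (T ω, V ω, W₂ ω)) := by
    simp only [condMutualInfo]
    linarith [e_a1, e_a2, e_a3, e_a4, e_a5]
  -- permutation identities for chainB
  have e_b1 : entropy μ (fun ω => (U ω, (T ω, V ω, W₁ ω, W₂ ω)))
      = entropy μ (fun ω => (W₂ ω, (U ω, T ω, V ω, W₁ ω))) :=
    entropy_congr μ
      (fun p : SW₂ × SU × ST × SV × SW₁ => (p.2.1, (p.2.2.1, (p.2.2.2.1, (p.2.2.2.2, p.1)))))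
      (fun p : SU × ST × SV × SW₁ × SW₂ => (p.2.2.2.2, (p.1, (p.2.1, (p.2.2.1, p.2.2.2.1))))) (fun _ => rfl)
      (fun ω => (W₂ ω, (U ω, T ω, V ω, W₁ ω)))
  have e_b2 : entropy μ (fun ω => (Y₁ ω, (T ω, V ω, W₁ ω, W₂ ω)))
      = entropy μ (fun ω => (W₂ ω, (Y₁ ω, (T ω, V ω, W₁ ω)))) :=
    entropy_congr μ
      (fun p : SW₂ × SY₁ × ST × SV × SW₁ => (p.2.1, (p.2.2.1, (p.2.2.2.1, (p.2.2.2.2, p.1)))))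
      (fun p : SY₁ × ST × SV × SW₁ × SW₂ => (p.2.2.2.2, (p.1, (p.2.1, (p.2.2.1, p.2.2.2.1))))) (fun _ => rfl)
      (fun ω => (W₂ ω, (Y₁ ω, (T ω, V ω, W₁ ω))))
  have e_b3 : entropy μ (fun ω => (U ω, (Y₁ ω, (T ω, V ω, W₁ ω, W₂ ω))))
      = entropy μ (fun ω => (W₂ ω, (Y₁ ω, (U ω, T ω, V ω, W₁ ω)))) :=
    entropy_congr μ
      (fun p : SW₂ × SY₁ × SU × ST × SV × SW₁ => (p.2.2.1, (p.2.1, (p.2.2.2.1, (p.2.2.2.2.1, (p.2.2.2.2.2, p.1))))))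
      (fun p : SU × SY₁ × ST × SV × SW₁ × SW₂ => (p.2.2.2.2.2, (p.2.1, (p.1, (p.2.2.1, (p.2.2.2.1, p.2.2.2.2.1))))))
      (fun _ => rfl)
      (fun ω => (W₂ ω, (Y₁ ω, (U ω, T ω, V ω, W₁ ω))))
  have e_b4 : entropy μ (fun ω => (T ω, V ω, W₁ ω, W₂ ω))
      = entropy μ (fun ω => (W₂ ω, (T ω, V ω, W₁ ω))) :=
    entropy_congr μ
      (fun p : SW₂ × ST × SV × SW₁ => (p.2.1, (p.2.2.1, (p.2.2.2, p.1))))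
      (fun p : ST × SV × SW₁ × SW₂ => (p.2.2.2, (p.1, (p.2.1, p.2.2.1)))) (fun _ => rfl)
      (fun ω => (W₂ ω, (T ω, V ω, W₁ ω)))
  have e_b5 : entropy μ (fun ω => (U ω, (Y₁ ω, (T ω, V ω, W₁ ω))))
      = entropy μ (fun ω => (Y₁ ω, (U ω, T ω, V ω, W₁ ω))) :=
    entropy_congr μ (fun p : SY₁ × SU × ST × SV × SW₁ => (p.2.1, (p.1, p.2.2)))
      (fun p : SU × SY₁ × ST × SV × SW₁ => (p.2.1, (p.1, p.2.2))) (fun _ => rfl)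
      (fun ω => (Y₁ ω, (U ω, T ω, V ω, W₁ ω)))
  have chainB : condMutualInfo μ U Y₁ (fun ω => (T ω, V ω, W₁ ω, W₂ ω))
        + condMutualInfo μ W₂ Y₁ (fun ω => (T ω, V ω, W₁ ω))
      = condMutualInfo μ U Y₁ (fun ω => (T ω, V ω, W₁ ω))
        + condMutualInfo μ W₂ Y₁ (fun ω => (U ω, T ω, V ω, W₁ ω)) := by
    simp only [condMutualInfo]
    linarith [e_b1, e_b2, e_b3, e_b4, e_b5]
  linarith [h0, h1, h2, chainA, chainB, n1]
end

section
/- Let T, U, V, W₁, W₂, Y₁, Y₂ be random variables on a common probability space taking values in finite sets. If I(U;Y₁|(T,W₁)) = I(U;Y₁|W₁), I(W₂;Y₁|(T,U,W₁)) = I(W₁;Y₂|(T,U,W₂)), and I(V;Y₂|(T,U,W₂)) = I(V;Y₂|W₂), then I(T;Y₁|W₁) + I(U;Y₁|W₁) + I(V;Y₂|W₂) ≤ I(V;Y₂|(T,U,W₁,W₂)) + I((T,W₁,W₂);Y₁) + I(U;Y₁|(T,W₁,W₂)). -/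
open MeasureTheory Real

section Auxiliary

lemma term_ineq_aux {p a b q : ℝ} (hp : 0 ≤ p) (hpa : p ≤ a) (hpb : p ≤ b) (hpq : p ≤ q) :
    p - a * b / q ≤ p * Real.log p + p * Real.log q - p * Real.log a - p * Real.log b := by
  rcases eq_or_lt_of_le hp with h0 | h0
  · have hq0 : 0 ≤ q := le_trans hp hpq
    have : 0 ≤ a * b / q := div_nonneg (mul_nonneg (hp.trans hpa) (hp.trans hpb)) hq0
    simp only [← h0]
    simp
    linarith
  · have ha : 0 < a := lt_of_lt_of_le h0 hpa
    have hb : 0 < b := lt_of_lt_of_le h0 hpb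
    have hq : 0 < q := lt_of_lt_of_le h0 hpq
    have hx : 0 < a * b / (p * q) := by positivity
    have hlog : Real.log (a * b / (p * q)) ≤ a * b / (p * q) - 1 :=
      Real.log_le_sub_one_of_pos hx
    have hlogeq : Real.log (a * b / (p * q)) =
        Real.log a + Real.log b - Real.log p - Real.log q := by
      rw [Real.log_div (by positivity) (by positivity), Real.log_mul ha.ne' hb.ne',
        Real.log_mul h0.ne' hq.ne']
      ring
    have hr : p * (a * b / (p * q)) = a * b / q := by
      field_simp
    have := mul_le_mul_of_nonneg_left hlog hp
    rw [hlogeq] at this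
    nlinarith [this]

lemma key_ineq_aux {ι κ ρ : Type*} [Fintype ι] [Fintype κ] [Fintype ρ]
    (p : ι → κ → ρ → ℝ) (hp : ∀ x y z, 0 ≤ p x y z)
    (hs : ∑ x, ∑ y, ∑ z, p x y z = 1) :
    (∑ x, ∑ y, ∑ z, Real.negMulLog (p x y z)) + ∑ z, Real.negMulLog (∑ x, ∑ y, p x y z)
      ≤ (∑ x, ∑ z, Real.negMulLog (∑ y, p x y z))
        + ∑ y, ∑ z, Real.negMulLog (∑ x, p x y z) := by
  classical
  have hpa : ∀ x y z, p x y z ≤ ∑ y', p x y' z := fun x y z =>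
    Finset.single_le_sum (fun y' _ => hp x y' z) (Finset.mem_univ y)
  have hpb : ∀ x y z, p x y z ≤ ∑ x', p x' y z := fun x y z =>
    Finset.single_le_sum (fun x' _ => hp x' y z) (Finset.mem_univ x)
  have haq : ∀ x z, (∑ y', p x y' z) ≤ ∑ x', ∑ y', p x' y' z := fun x z =>
    Finset.single_le_sum (fun x' _ => Finset.sum_nonneg fun y' _ => hp x' y' z)
      (Finset.mem_univ x)
  have hq0 : ∀ z, 0 ≤ ∑ x', ∑ y', p x' y' z := fun z =>
    Finset.sum_nonneg fun x' _ => Finset.sum_nonneg fun y' _ => hp x' y' z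
  have E1 : (∑ x, ∑ z, Real.negMulLog (∑ y, p x y z))
      = ∑ x, ∑ y, ∑ z, -(p x y z * Real.log (∑ y', p x y' z)) := by
    refine Finset.sum_congr rfl fun x _ => ?_
    rw [← Finset.sum_comm]
    refine Finset.sum_congr rfl fun z _ => ?_
    rw [Real.negMulLog, neg_mul, Finset.sum_mul, ← Finset.sum_neg_distrib]
  have E2 : (∑ y, ∑ z, Real.negMulLog (∑ x, p x y z))
      = ∑ x, ∑ y, ∑ z, -(p x y z * Real.log (∑ x', p x' y z)) :=
    calc (∑ y, ∑ z, Real.negMulLog (∑ x, p x y z))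
        = ∑ y, ∑ z, ∑ x, -(p x y z * Real.log (∑ x', p x' y z)) :=
          Finset.sum_congr rfl fun y _ => Finset.sum_congr rfl fun z _ => by
            rw [Real.negMulLog, neg_mul, Finset.sum_mul, ← Finset.sum_neg_distrib]
      _ = ∑ y, ∑ x, ∑ z, -(p x y z * Real.log (∑ x', p x' y z)) :=
          Finset.sum_congr rfl fun y _ => Finset.sum_comm
      _ = ∑ x, ∑ y, ∑ z, -(p x y z * Real.log (∑ x', p x' y z)) := Finset.sum_comm
  have E3 : (∑ z, Real.negMulLog (∑ x, ∑ y, p x y z))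
      = ∑ x, ∑ y, ∑ z, -(p x y z * Real.log (∑ x', ∑ y', p x' y' z)) :=
    calc (∑ z, Real.negMulLog (∑ x, ∑ y, p x y z))
        = ∑ z, ∑ x, ∑ y, -(p x y z * Real.log (∑ x', ∑ y', p x' y' z)) :=
          Finset.sum_congr rfl fun z _ => by
            rw [Real.negMulLog, neg_mul, Finset.sum_mul, ← Finset.sum_neg_distrib]
            refine Finset.sum_congr rfl fun x _ => ?_
            rw [Finset.sum_mul, ← Finset.sum_neg_distrib]
      _ = ∑ x, ∑ z, ∑ y, -(p x y z * Real.log (∑ x', ∑ y', p x' y' z)) :=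
          Finset.sum_comm
      _ = ∑ x, ∑ y, ∑ z, -(p x y z * Real.log (∑ x', ∑ y', p x' y' z)) :=
          Finset.sum_congr rfl fun x _ => Finset.sum_comm
  have habq : (∑ x, ∑ y, ∑ z, (∑ y', p x y' z) * (∑ x', p x' y z)
        / (∑ x', ∑ y', p x' y' z)) = 1 := by
    have reord : (∑ x, ∑ y, ∑ z, (∑ y', p x y' z) * (∑ x', p x' y z)
          / (∑ x', ∑ y', p x' y' z))
        = ∑ z, ∑ x, ∑ y, (∑ y', p x y' z) * (∑ x', p x' y z)
          / (∑ x', ∑ y', p x' y' z) :=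
      calc (∑ x, ∑ y, ∑ z, (∑ y', p x y' z) * (∑ x', p x' y z)
            / (∑ x', ∑ y', p x' y' z))
          = ∑ x, ∑ z, ∑ y, (∑ y', p x y' z) * (∑ x', p x' y z)
            / (∑ x', ∑ y', p x' y' z) :=
            Finset.sum_congr rfl fun x _ => Finset.sum_comm
        _ = ∑ z, ∑ x, ∑ y, (∑ y', p x y' z) * (∑ x', p x' y z)
            / (∑ x', ∑ y', p x' y' z) := Finset.sum_comm
    have hz : ∀ z, (∑ x, ∑ y, (∑ y', p x y' z) * (∑ x', p x' y z)
          / (∑ x', ∑ y', p x' y' z)) = ∑ x, ∑ y, p x y z := by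
      intro z
      have hbq : (∑ y, ∑ x', p x' y z) = ∑ x', ∑ y', p x' y' z := Finset.sum_comm
      have step : (∑ x, ∑ y, (∑ y', p x y' z) * (∑ x', p x' y z)
            / (∑ x', ∑ y', p x' y' z))
          = (∑ x, ∑ y', p x y' z) * (∑ y, ∑ x', p x' y z)
            / (∑ x', ∑ y', p x' y' z) := by
        rw [Finset.sum_mul, Finset.sum_div]
        refine Finset.sum_congr rfl fun x _ => ?_
        rw [Finset.mul_sum, Finset.sum_div]
      rw [step, hbq]
      rcases eq_or_lt_of_le (hq0 z) with h | h
      · rw [← h]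
        simp
      · rw [mul_div_assoc, div_self h.ne', mul_one]
    rw [reord]
    calc (∑ z, ∑ x, ∑ y, (∑ y', p x y' z) * (∑ x', p x' y z)
          / (∑ x', ∑ y', p x' y' z))
        = ∑ z, ∑ x, ∑ y, p x y z := Finset.sum_congr rfl fun z _ => hz z
      _ = ∑ x, ∑ z, ∑ y, p x y z := Finset.sum_comm
      _ = ∑ x, ∑ y, ∑ z, p x y z := Finset.sum_congr rfl fun x _ => Finset.sum_comm
      _ = 1 := hs
  have main : (0:ℝ) ≤ ∑ x, ∑ y, ∑ z,
      ((-(p x y z * Real.log (∑ y', p x y' z))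
        + -(p x y z * Real.log (∑ x', p x' y z)))
       - (Real.negMulLog (p x y z) + -(p x y z * Real.log (∑ x', ∑ y', p x' y' z)))) := by
    have lower : (∑ x, ∑ y, ∑ z,
        (p x y z - (∑ y', p x y' z) * (∑ x', p x' y z) / (∑ x', ∑ y', p x' y' z)))
        = 0 := by
      simp only [Finset.sum_sub_distrib]
      rw [hs, habq]
      ring
    rw [← lower]
    refine Finset.sum_le_sum fun x _ => Finset.sum_le_sum fun y _ =>
      Finset.sum_le_sum fun z _ => ?_
    have h := term_ineq_aux (hp x y z) (hpa x y z) (hpb x y z)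
      ((hpa x y z).trans (haq x z))
    rw [Real.negMulLog, neg_mul]
    linarith [h]
  rw [E1, E2, E3]
  rw [← sub_nonneg]
  simp only [← Finset.sum_add_distrib]
  simp only [← Finset.sum_sub_distrib]
  exact main

variable {Ω : Type*} [MeasurableSpace Ω] (μ : Measure Ω) [IsProbabilityMeasure μ]

omit [IsProbabilityMeasure μ] in
/-- entropy is invariant under injective recoding. -/
lemma entropy_comp_aux {S T : Type*} [Fintype S] [Fintype T]
    (f : S → T) (hf : Function.Injective f) (X : Ω → S) :
    entropy μ (fun ω => f (X ω)) = entropy μ X := by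
  classical
  unfold entropy
  rw [← Finset.sum_subset (Finset.subset_univ (Finset.univ.image f))]
  · rw [Finset.sum_image (fun a _ b _ h => hf h)]
    refine Finset.sum_congr rfl fun s _ => ?_
    have : (fun ω => f (X ω)) ⁻¹' {f s} = X ⁻¹' {s} := by
      ext ω; simp [hf.eq_iff]
    rw [this]
  · intro t _ ht
    have : (fun ω => f (X ω)) ⁻¹' {t} = ∅ := by
      ext ω
      simp only [Set.mem_preimage, Set.mem_singleton_iff, Set.mem_empty_iff_false, iff_false]
      intro h
      exact ht (Finset.mem_image.2 ⟨X ω, Finset.mem_univ _, h⟩)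
    simp [this]

omit [IsProbabilityMeasure μ] in
lemma sum_measure_preimage_aux {κ : Type*} [Fintype κ] [MeasurableSpace κ]
    [MeasurableSingletonClass κ] {G : Ω → κ} (hG : Measurable G)
    {A : Set Ω} (hA : MeasurableSet A) :
    μ A = ∑ y : κ, μ (A ∩ G ⁻¹' {y}) := by
  rw [← measure_biUnion_finset (f := fun y => A ∩ G ⁻¹' {y}) ?_
        (fun y _ => hA.inter (hG (measurableSet_singleton y)))]
  · congr 1
    ext ω
    simp
  · intro y _ y' _ hyy'
    refine Set.disjoint_left.2 fun ω h1 h2 => hyy' ?_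
    have e1 := h1.2; have e2 := h2.2
    simp only [Set.mem_preimage, Set.mem_singleton_iff] at e1 e2
    rw [← e1, ← e2]

omit [IsProbabilityMeasure μ] in
lemma toReal_sum_measure_preimage_aux {κ : Type*} [Fintype κ] [MeasurableSpace κ]
    [MeasurableSingletonClass κ] {G : Ω → κ} (hG : Measurable G)
    {A : Set Ω} (hA : MeasurableSet A) [IsFiniteMeasure μ] :
    (μ A).toReal = ∑ y : κ, (μ (A ∩ G ⁻¹' {y})).toReal := by
  rw [sum_measure_preimage_aux μ hG hA, ENNReal.toReal_sum (fun y _ => measure_ne_top μ _)]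

/-- Nonnegativity of conditional mutual information. -/
lemma condMutualInfo_nonneg_aux {S T R : Type*}
    [Fintype S] [MeasurableSpace S] [MeasurableSingletonClass S]
    [Fintype T] [MeasurableSpace T] [MeasurableSingletonClass T]
    [Fintype R] [MeasurableSpace R] [MeasurableSingletonClass R]
    {X : Ω → S} {Y : Ω → T} {Z : Ω → R}
    (hX : Measurable X) (hY : Measurable Y) (hZ : Measurable Z) :
    0 ≤ condMutualInfo μ X Y Z := by
  classical
  set p : S → T → R → ℝ :=
    fun x y z => (μ ((fun ω => (X ω, Y ω, Z ω)) ⁻¹' {(x, y, z)})).toReal with hp_def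
  have hp : ∀ x y z, 0 ≤ p x y z := fun _ _ _ => ENNReal.toReal_nonneg
  have hF : Measurable (fun ω => (X ω, Y ω, Z ω)) := hX.prodMk (hY.prodMk hZ)
  have HXZ : entropy μ (fun ω => (X ω, Z ω)) = ∑ x, ∑ z, Real.negMulLog (∑ y, p x y z) := by
    unfold entropy
    rw [Fintype.sum_prod_type]
    refine Finset.sum_congr rfl fun x _ => Finset.sum_congr rfl fun z _ => ?_
    congr 1
    rw [toReal_sum_measure_preimage_aux μ hY
      ((hX.prodMk hZ) (measurableSet_singleton (x, z)))]
    refine Finset.sum_congr rfl fun y _ => ?_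
    have hset : ((fun ω => (X ω, Z ω)) ⁻¹' {(x, z)}) ∩ Y ⁻¹' {y}
        = (fun ω => (X ω, Y ω, Z ω)) ⁻¹' {(x, y, z)} := by
      ext ω
      simp only [Set.mem_inter_iff, Set.mem_preimage, Set.mem_singleton_iff, Prod.mk.injEq]
      tauto
    rw [hset]
  have HYZ : entropy μ (fun ω => (Y ω, Z ω)) = ∑ y, ∑ z, Real.negMulLog (∑ x, p x y z) := by
    unfold entropy
    rw [Fintype.sum_prod_type]
    refine Finset.sum_congr rfl fun y _ => Finset.sum_congr rfl fun z _ => ?_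
    congr 1
    rw [toReal_sum_measure_preimage_aux μ hX
      ((hY.prodMk hZ) (measurableSet_singleton (y, z)))]
    refine Finset.sum_congr rfl fun x _ => ?_
    have hset : ((fun ω => (Y ω, Z ω)) ⁻¹' {(y, z)}) ∩ X ⁻¹' {x}
        = (fun ω => (X ω, Y ω, Z ω)) ⁻¹' {(x, y, z)} := by
      ext ω
      simp only [Set.mem_inter_iff, Set.mem_preimage, Set.mem_singleton_iff, Prod.mk.injEq]
      tauto
    rw [hset]
  have HZ : entropy μ Z = ∑ z, Real.negMulLog (∑ x, ∑ y, p x y z) := by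
    unfold entropy
    refine Finset.sum_congr rfl fun z _ => ?_
    congr 1
    rw [toReal_sum_measure_preimage_aux μ hX (hZ (measurableSet_singleton z))]
    refine Finset.sum_congr rfl fun x _ => ?_
    rw [toReal_sum_measure_preimage_aux μ hY
      ((hZ (measurableSet_singleton z)).inter (hX (measurableSet_singleton x)))]
    refine Finset.sum_congr rfl fun y _ => ?_
    have hset : (Z ⁻¹' {z} ∩ X ⁻¹' {x}) ∩ Y ⁻¹' {y}
        = (fun ω => (X ω, Y ω, Z ω)) ⁻¹' {(x, y, z)} := by
      ext ω
      simp only [Set.mem_inter_iff, Set.mem_preimage, Set.mem_singleton_iff, Prod.mk.injEq]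
      tauto
    rw [hset]
  have HXYZ : entropy μ (fun ω => (X ω, Y ω, Z ω))
      = ∑ x, ∑ y, ∑ z, Real.negMulLog (p x y z) := by
    unfold entropy
    rw [Fintype.sum_prod_type]
    refine Finset.sum_congr rfl fun x _ => ?_
    rw [Fintype.sum_prod_type]
  have hs : (∑ x, ∑ y, ∑ z, p x y z) = 1 := by
    have h1 : (μ (Set.univ : Set Ω)).toReal
        = ∑ v : S × T × R, (μ ((fun ω => (X ω, Y ω, Z ω)) ⁻¹' {v})).toReal := by
      rw [toReal_sum_measure_preimage_aux μ hF MeasurableSet.univ]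
      simp
    rw [measure_univ] at h1
    simp only [ENNReal.toReal_one] at h1
    rw [Fintype.sum_prod_type] at h1
    conv at h1 => rw [Fintype.sum_congr _ _ (fun x => Fintype.sum_prod_type _)]
    exact h1.symm
  have := key_ineq_aux p hp hs
  unfold condMutualInfo
  rw [HXZ, HYZ, HZ, HXYZ]
  linarith

omit [IsProbabilityMeasure μ] in
lemma entropy_const_aux : entropy μ (fun _ : Ω => ()) = Real.negMulLog (μ Set.univ).toReal := by
  unfold entropy
  rw [Fintype.sum_unique]
  have hset : ((fun _ : Ω => ()) ⁻¹' {default}) = Set.univ := by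
    ext ω
    simp
  rw [hset]

/-- Nonnegativity of mutual information. -/
lemma mutualInfo_nonneg_aux {S T : Type*}
    [Fintype S] [MeasurableSpace S] [MeasurableSingletonClass S]
    [Fintype T] [MeasurableSpace T] [MeasurableSingletonClass T]
    {X : Ω → S} {Y : Ω → T} (hX : Measurable X) (hY : Measurable Y) :
    0 ≤ mutualInfo μ X Y := by
  have h := condMutualInfo_nonneg_aux μ hX hY (measurable_const (a := ()))
  unfold condMutualInfo at h
  rw [entropy_comp_aux μ (fun s : S => (s, ())) (fun a b h => by simpa using h) X,
    entropy_comp_aux μ (fun t : T => (t, ())) (fun a b h => by simpa using h) Y,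
    entropy_comp_aux μ (fun v : S × T => (v.1, v.2, ()))
      (fun a b h => by simpa [Prod.ext_iff] using h) (fun ω => (X ω, Y ω)),
    entropy_const_aux μ] at h
  simp only [measure_univ, ENNReal.toReal_one, Real.negMulLog_one] at h
  unfold mutualInfo
  linarith

end Auxiliary

theorem stmt_13
    {Ω : Type*} [MeasurableSpace Ω] (μ : Measure Ω) [IsProbabilityMeasure μ]
    {ST SU SV SW₁ SW₂ SY₁ SY₂ : Type*}
    [Fintype ST] [MeasurableSpace ST] [MeasurableSingletonClass ST] [Fintype SU] [MeasurableSpace SU] [MeasurableSingletonClass SU] [Fintype SV] [MeasurableSpace SV] [MeasurableSingletonClass SV] [Fintype SW₁] [MeasurableSpace SW₁] [MeasurableSingletonClass SW₁] [Fintype SW₂] [MeasurableSpace SW₂] [MeasurableSingletonClass SW₂] [Fintype SY₁] [MeasurableSpace SY₁] [MeasurableSingletonClass SY₁] [Fintype SY₂] [MeasurableSpace SY₂] [MeasurableSingletonClass SY₂]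
    (T : Ω → ST) (U : Ω → SU) (V : Ω → SV) (W₁ : Ω → SW₁) (W₂ : Ω → SW₂) (Y₁ : Ω → SY₁) (Y₂ : Ω → SY₂)
    (hT : Measurable T) (hU : Measurable U) (hV : Measurable V) (hW₁ : Measurable W₁) (hW₂ : Measurable W₂) (hY₁ : Measurable Y₁) (hY₂ : Measurable Y₂)
    (h0 : condMutualInfo μ U Y₁ (fun ω => (T ω, W₁ ω)) = condMutualInfo μ U Y₁ W₁)
    (h1 : condMutualInfo μ W₂ Y₁ (fun ω => (T ω, U ω, W₁ ω)) = condMutualInfo μ W₁ Y₂ (fun ω => (T ω, U ω, W₂ ω)))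
    (h2 : condMutualInfo μ V Y₂ (fun ω => (T ω, U ω, W₂ ω)) = condMutualInfo μ V Y₂ W₂)
    : condMutualInfo μ T Y₁ W₁ + condMutualInfo μ U Y₁ W₁ + condMutualInfo μ V Y₂ W₂ ≤ condMutualInfo μ V Y₂ (fun ω => (T ω, U ω, W₁ ω, W₂ ω)) + mutualInfo μ (fun ω => (T ω, W₁ ω, W₂ ω)) Y₁ + condMutualInfo μ U Y₁ (fun ω => (T ω, W₁ ω, W₂ ω)) := by
  have n1 : 0 ≤ mutualInfo μ W₁ Y₁ := mutualInfo_nonneg_aux μ hW₁ hY₁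
  have n2 : 0 ≤ condMutualInfo μ W₁ Y₂ (fun ω => (T ω, U ω, V ω, W₂ ω)) :=
    condMutualInfo_nonneg_aux μ hW₁ hY₂ (hT.prodMk (hU.prodMk (hV.prodMk hW₂)))
  have e1 : entropy μ (fun ω => (W₂ ω, T ω, U ω, W₁ ω))
      = entropy μ (fun ω => (U ω, T ω, W₁ ω, W₂ ω)) :=
    entropy_comp_aux μ (fun v : SU × ST × SW₁ × SW₂ => (v.2.2.2, v.2.1, v.1, v.2.2.1))
      (by rintro ⟨a1, a2, a3, a4⟩ ⟨b1, b2, b3, b4⟩ h; simp_all)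
      (fun ω => (U ω, T ω, W₁ ω, W₂ ω))
  have e2 : entropy μ (fun ω => (W₁ ω, T ω, U ω, W₂ ω))
      = entropy μ (fun ω => (U ω, T ω, W₁ ω, W₂ ω)) :=
    entropy_comp_aux μ (fun v : SU × ST × SW₁ × SW₂ => (v.2.2.1, v.2.1, v.1, v.2.2.2))
      (by rintro ⟨a1, a2, a3, a4⟩ ⟨b1, b2, b3, b4⟩ h; simp_all)
      (fun ω => (U ω, T ω, W₁ ω, W₂ ω))
  have e3 : entropy μ (fun ω => (W₂ ω, Y₁ ω, T ω, U ω, W₁ ω))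
      = entropy μ (fun ω => (U ω, Y₁ ω, T ω, W₁ ω, W₂ ω)) :=
    entropy_comp_aux μ
      (fun v : SU × SY₁ × ST × SW₁ × SW₂ => (v.2.2.2.2, v.2.1, v.2.2.1, v.1, v.2.2.2.1))
      (by rintro ⟨a1, a2, a3, a4, a5⟩ ⟨b1, b2, b3, b4, b5⟩ h; simp_all)
      (fun ω => (U ω, Y₁ ω, T ω, W₁ ω, W₂ ω))
  have e4 : entropy μ (fun ω => (W₁ ω, Y₂ ω, T ω, U ω, W₂ ω))
      = entropy μ (fun ω => (Y₂ ω, T ω, U ω, W₁ ω, W₂ ω)) :=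
    entropy_comp_aux μ
      (fun v : SY₂ × ST × SU × SW₁ × SW₂ => (v.2.2.2.1, v.1, v.2.1, v.2.2.1, v.2.2.2.2))
      (by rintro ⟨a1, a2, a3, a4, a5⟩ ⟨b1, b2, b3, b4, b5⟩ h; simp_all)
      (fun ω => (Y₂ ω, T ω, U ω, W₁ ω, W₂ ω))
  have e5 : entropy μ (fun ω => (T ω, U ω, W₁ ω))
      = entropy μ (fun ω => (U ω, T ω, W₁ ω)) :=
    entropy_comp_aux μ (fun v : SU × ST × SW₁ => (v.2.1, v.1, v.2.2))
      (by rintro ⟨a1, a2, a3⟩ ⟨b1, b2, b3⟩ h; simp_all)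
      (fun ω => (U ω, T ω, W₁ ω))
  have e6 : entropy μ (fun ω => (Y₁ ω, T ω, U ω, W₁ ω))
      = entropy μ (fun ω => (U ω, Y₁ ω, T ω, W₁ ω)) :=
    entropy_comp_aux μ (fun v : SU × SY₁ × ST × SW₁ => (v.2.1, v.2.2.1, v.1, v.2.2.2))
      (by rintro ⟨a1, a2, a3, a4⟩ ⟨b1, b2, b3, b4⟩ h; simp_all)
      (fun ω => (U ω, Y₁ ω, T ω, W₁ ω))
  have e7 : entropy μ (fun ω => (V ω, T ω, U ω, W₂ ω))
      = entropy μ (fun ω => (T ω, U ω, V ω, W₂ ω)) :=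
    entropy_comp_aux μ (fun v : ST × SU × SV × SW₂ => (v.2.2.1, v.1, v.2.1, v.2.2.2))
      (by rintro ⟨a1, a2, a3, a4⟩ ⟨b1, b2, b3, b4⟩ h; simp_all)
      (fun ω => (T ω, U ω, V ω, W₂ ω))
  have e8 : entropy μ (fun ω => (V ω, Y₂ ω, T ω, U ω, W₂ ω))
      = entropy μ (fun ω => (Y₂ ω, T ω, U ω, V ω, W₂ ω)) :=
    entropy_comp_aux μ
      (fun v : SY₂ × ST × SU × SV × SW₂ => (v.2.2.2.1, v.1, v.2.1, v.2.2.1, v.2.2.2.2))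
      (by rintro ⟨a1, a2, a3, a4, a5⟩ ⟨b1, b2, b3, b4, b5⟩ h; simp_all)
      (fun ω => (Y₂ ω, T ω, U ω, V ω, W₂ ω))
  have e9 : entropy μ (fun ω => ((T ω, W₁ ω, W₂ ω), Y₁ ω))
      = entropy μ (fun ω => (Y₁ ω, T ω, W₁ ω, W₂ ω)) :=
    entropy_comp_aux μ
      (fun v : SY₁ × ST × SW₁ × SW₂ => ((v.2.1, v.2.2.1, v.2.2.2), v.1))
      (by rintro ⟨a1, a2, a3, a4⟩ ⟨b1, b2, b3, b4⟩ h; simp_all)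
      (fun ω => (Y₁ ω, T ω, W₁ ω, W₂ ω))
  have e10 : entropy μ (fun ω => (V ω, Y₂ ω, T ω, U ω, W₁ ω, W₂ ω))
      = entropy μ (fun ω => (W₁ ω, Y₂ ω, T ω, U ω, V ω, W₂ ω)) :=
    entropy_comp_aux μ
      (fun v : SW₁ × SY₂ × ST × SU × SV × SW₂ =>
        (v.2.2.2.2.1, v.2.1, v.2.2.1, v.2.2.2.1, v.1, v.2.2.2.2.2))
      (by rintro ⟨a1, a2, a3, a4, a5, a6⟩ ⟨b1, b2, b3, b4, b5, b6⟩ h; simp_all)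
      (fun ω => (W₁ ω, Y₂ ω, T ω, U ω, V ω, W₂ ω))
  have e11 : entropy μ (fun ω => (V ω, T ω, U ω, W₁ ω, W₂ ω))
      = entropy μ (fun ω => (W₁ ω, T ω, U ω, V ω, W₂ ω)) :=
    entropy_comp_aux μ
      (fun v : SW₁ × ST × SU × SV × SW₂ =>
        (v.2.2.2.1, v.2.1, v.2.2.1, v.1, v.2.2.2.2))
      (by rintro ⟨a1, a2, a3, a4, a5⟩ ⟨b1, b2, b3, b4, b5⟩ h; simp_all)
      (fun ω => (W₁ ω, T ω, U ω, V ω, W₂ ω))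
  have e12 : entropy μ (fun ω => (W₁ ω, Y₁ ω))
      = entropy μ (fun ω => (Y₁ ω, W₁ ω)) :=
    entropy_comp_aux μ (fun v : SY₁ × SW₁ => (v.2, v.1))
      (by rintro ⟨a1, a2⟩ ⟨b1, b2⟩ h; simp_all)
      (fun ω => (Y₁ ω, W₁ ω))
  have e13 : entropy μ (fun ω => (T ω, Y₁ ω, W₁ ω))
      = entropy μ (fun ω => (Y₁ ω, T ω, W₁ ω)) :=
    entropy_comp_aux μ (fun v : SY₁ × ST × SW₁ => (v.2.1, v.1, v.2.2))
      (by rintro ⟨a1, a2, a3⟩ ⟨b1, b2, b3⟩ h; simp_all)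
      (fun ω => (Y₁ ω, T ω, W₁ ω))
  have e14 : entropy μ (fun ω => (T ω, U ω, W₁ ω, W₂ ω))
      = entropy μ (fun ω => (U ω, T ω, W₁ ω, W₂ ω)) :=
    entropy_comp_aux μ (fun v : SU × ST × SW₁ × SW₂ => (v.2.1, v.1, v.2.2.1, v.2.2.2))
      (by rintro ⟨a1, a2, a3, a4⟩ ⟨b1, b2, b3, b4⟩ h; simp_all)
      (fun ω => (U ω, T ω, W₁ ω, W₂ ω))
  simp only [condMutualInfo, mutualInfo] at h0 h1 h2 n1 n2 ⊢
  linarith [e1, e2, e3, e4, e5, e6, e7, e8, e9, e10, e11, e12, e13, e14, h0, h1, h2, n1, n2]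
end

section
/- Let T, U, V, W₁, W₂, Y₁, Y₂ be random variables on a common probability space taking values in finite sets. If I(V;Y₂|(T,W₂)) = I(V;Y₂|W₂), I(W₁;Y₂|(T,V,W₂)) = I(W₂;Y₁|(T,V,W₁)), and I(U;Y₁|(T,V,W₁)) = I(U;Y₁|W₁), then I(T;Y₂|W₂) + I(U;Y₁|W₁) + I(V;Y₂|W₂) ≤ I(U;Y₁|(T,V,W₁,W₂)) + I((T,W₁,W₂);Y₂) + I(V;Y₂|(T,W₁,W₂)). -/
open MeasureTheory Real

lemma entropy_comp_eq {Ω : Type*} [MeasurableSpace Ω] (μ : Measure Ω) {S S' : Type*}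
    [Fintype S] [Fintype S'] (X : Ω → S) (X' : Ω → S') (e : S → S')
    (he : Function.Injective e) (hX : ∀ ω, X' ω = e (X ω)) :
    entropy μ X' = entropy μ X := by
  classical
  unfold entropy
  rw [← Finset.sum_subset (Finset.subset_univ (Finset.univ.image e))]
  · rw [Finset.sum_image (fun x _ y _ h => he h)]
    refine Finset.sum_congr rfl fun s _ => ?_
    have : X' ⁻¹' {e s} = X ⁻¹' {s} := by
      ext ω
      simp [hX ω, he.eq_iff]
    rw [this]
  · intro s' _ hs'
    have : X' ⁻¹' {s'} = ∅ := by
      ext ω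
      simp only [Set.mem_preimage, Set.mem_singleton_iff, Set.mem_empty_iff_false, iff_false]
      intro h
      exact hs' (Finset.mem_image.2 ⟨X ω, Finset.mem_univ _, by rw [← hX ω, h]⟩)
    simp [this]

lemma sum_measure_fiber_comp {Ω B C : Type*} [MeasurableSpace Ω] (μ : Measure Ω) [Fintype B]
    [MeasurableSpace C] [MeasurableSingletonClass C] (F : Ω → C) (hF : Measurable F)
    (j : B → C) (hj : Function.Injective j) :
    ∑ b : B, μ (F ⁻¹' {j b}) = μ (F ⁻¹' (Set.range j)) := by
  classical
  rw [← Finset.sum_image (f := fun c => μ (F ⁻¹' {c})) (fun x _ y _ h => hj h),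
    sum_measure_preimage_singleton _ (fun y _ => hF (measurableSet_singleton y))]
  congr 1
  ext c
  simp [Set.range]


lemma key_ineq {SX SY SR : Type*} [Fintype SX] [Fintype SY] [Fintype SR]
    (p : SX → SY → SR → ℝ) (hp : ∀ x y z, 0 ≤ p x y z)
    (hsum : ∑ x, ∑ y, ∑ z, p x y z = 1) :
    0 ≤ (∑ x, ∑ z, negMulLog (∑ y, p x y z)) + (∑ y, ∑ z, negMulLog (∑ x, p x y z))
      - (∑ x, ∑ y, ∑ z, negMulLog (p x y z)) - ∑ z, negMulLog (∑ x, ∑ y, p x y z) := by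
  classical
  set a : SX → SR → ℝ := fun x z => ∑ y, p x y z with ha
  set b : SY → SR → ℝ := fun y z => ∑ x, p x y z with hb
  set c : SR → ℝ := fun z => ∑ x, ∑ y, p x y z with hc
  have hpa : ∀ x y z, p x y z ≤ a x z := fun x y z =>
    Finset.single_le_sum (fun i _ => hp x i z) (Finset.mem_univ y)
  have hpb : ∀ x y z, p x y z ≤ b y z := fun x y z =>
    Finset.single_le_sum (fun i _ => hp i y z) (Finset.mem_univ x)
  have hac : ∀ x z, a x z ≤ c z := fun x z =>
    Finset.single_le_sum (f := fun i => ∑ y, p i y z)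
      (fun i _ => Finset.sum_nonneg fun j _ => hp i j z) (Finset.mem_univ x)
  have ha0 : ∀ x z, 0 ≤ a x z := fun x z => Finset.sum_nonneg fun j _ => hp x j z
  have hb0 : ∀ y z, 0 ≤ b y z := fun y z => Finset.sum_nonneg fun j _ => hp j y z
  have hc0 : ∀ z, 0 ≤ c z := fun z => Finset.sum_nonneg fun i _ =>
    Finset.sum_nonneg fun j _ => hp i j z
  have expand_a : ∑ x, ∑ z, negMulLog (a x z)
      = ∑ x, ∑ y, ∑ z, p x y z * (-Real.log (a x z)) := by
    refine Finset.sum_congr rfl fun x _ => ?_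
    rw [Finset.sum_comm]
    refine Finset.sum_congr rfl fun z _ => ?_
    simp only [negMulLog, ha, neg_mul, ← Finset.sum_mul]
    ring
  have expand_b : ∑ y, ∑ z, negMulLog (b y z)
      = ∑ x, ∑ y, ∑ z, p x y z * (-Real.log (b y z)) := by
    have step : ∀ y z, negMulLog (b y z) = ∑ x, p x y z * (-Real.log (b y z)) := by
      intro y z
      simp only [negMulLog, hb, neg_mul, ← Finset.sum_mul]
      ring
    calc ∑ y, ∑ z, negMulLog (b y z) = ∑ y, ∑ z, ∑ x, p x y z * (-Real.log (b y z)) := by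
          exact Finset.sum_congr rfl fun y _ => Finset.sum_congr rfl fun z _ => step y z
      _ = ∑ y, ∑ x, ∑ z, p x y z * (-Real.log (b y z)) :=
          Finset.sum_congr rfl fun y _ => Finset.sum_comm
      _ = ∑ x, ∑ y, ∑ z, p x y z * (-Real.log (b y z)) := Finset.sum_comm
  have expand_c : ∑ z, negMulLog (c z)
      = ∑ x, ∑ y, ∑ z, p x y z * (-Real.log (c z)) := by
    have step : ∀ z, negMulLog (c z) = ∑ x, ∑ y, p x y z * (-Real.log (c z)) := by
      intro z
      simp only [negMulLog, hc, neg_mul, ← Finset.sum_mul]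
      ring
    calc ∑ z, negMulLog (c z) = ∑ z, ∑ x, ∑ y, p x y z * (-Real.log (c z)) :=
          Finset.sum_congr rfl fun z _ => step z
      _ = ∑ x, ∑ z, ∑ y, p x y z * (-Real.log (c z)) := Finset.sum_comm
      _ = ∑ x, ∑ y, ∑ z, p x y z * (-Real.log (c z)) :=
          Finset.sum_congr rfl fun x _ => Finset.sum_comm
  have expand_p : ∑ x, ∑ y, ∑ z, negMulLog (p x y z)
      = ∑ x, ∑ y, ∑ z, p x y z * (-Real.log (p x y z)) := by
    refine Finset.sum_congr rfl fun x _ => Finset.sum_congr rfl fun y _ =>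
      Finset.sum_congr rfl fun z _ => ?_
    simp only [negMulLog]; ring
  rw [expand_a, expand_b, expand_c, expand_p]
  set g : SX → SY → SR → ℝ := fun x y z => if c z = 0 then 0 else a x z * b y z / c z with hg
  have hterm : ∀ x y z, p x y z - g x y z ≤
      p x y z * (-Real.log (a x z)) + p x y z * (-Real.log (b y z))
        - p x y z * (-Real.log (p x y z)) - p x y z * (-Real.log (c z)) := by
    intro x y z
    by_cases hcz : c z = 0
    · have hp0 : p x y z = 0 := le_antisymm (by
        calc p x y z ≤ a x z := hpa x y z
          _ ≤ c z := hac x z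
          _ = 0 := hcz) (hp x y z)
      simp [hg, hcz, hp0]
    · have hcpos : 0 < c z := lt_of_le_of_ne (hc0 z) (Ne.symm hcz)
      have hgval : g x y z = a x z * b y z / c z := by simp [hg, hcz]
      by_cases hp0 : p x y z = 0
      · rw [hgval, hp0]
        have : 0 ≤ a x z * b y z / c z := div_nonneg (mul_nonneg (ha0 x z) (hb0 y z)) (hc0 z)
        simp; linarith
      · have hppos : 0 < p x y z := lt_of_le_of_ne (hp x y z) (Ne.symm hp0)
        have hapos : 0 < a x z := lt_of_lt_of_le hppos (hpa x y z)
        have hbpos : 0 < b y z := lt_of_lt_of_le hppos (hpb x y z)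
        have hlog : Real.log (a x z * b y z / (p x y z * c z))
            ≤ a x z * b y z / (p x y z * c z) - 1 :=
          Real.log_le_sub_one_of_pos (by positivity)
        have hexp : Real.log (a x z * b y z / (p x y z * c z))
            = Real.log (a x z) + Real.log (b y z) - Real.log (p x y z) - Real.log (c z) := by
          rw [Real.log_div (by positivity) (by positivity), Real.log_mul (ne_of_gt hapos)
            (ne_of_gt hbpos), Real.log_mul (ne_of_gt hppos) (ne_of_gt hcpos)]
          ring
        have hmul : p x y z * Real.log (a x z * b y z / (p x y z * c z))
            ≤ a x z * b y z / c z - p x y z := by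
          have := mul_le_mul_of_nonneg_left hlog (le_of_lt hppos)
          have heq : p x y z * (a x z * b y z / (p x y z * c z) - 1)
              = a x z * b y z / c z - p x y z := by
            field_simp
          linarith [heq ▸ this]
        rw [hgval]
        rw [hexp] at hmul
        nlinarith [hmul]
  have hgsum : ∑ x, ∑ y, ∑ z, g x y z = 1 := by
    have colsum : ∀ z, ∑ x, ∑ y, g x y z = c z := by
      intro z
      by_cases hcz : c z = 0
      · simp [hg, hcz]
      · have : ∑ x, ∑ y, g x y z = (∑ x, a x z) * (∑ y, b y z) / c z := by
          rw [Finset.sum_mul_sum, Finset.sum_div]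
          refine Finset.sum_congr rfl fun x _ => ?_
          rw [Finset.sum_div]
          exact Finset.sum_congr rfl fun y _ => by simp [hg, hcz]
        rw [this]
        have hA : ∑ x, a x z = c z := rfl
        have hB : ∑ y, b y z = c z := Finset.sum_comm
        rw [hA, hB]
        field_simp
    calc ∑ x, ∑ y, ∑ z, g x y z = ∑ x, ∑ z, ∑ y, g x y z :=
          Finset.sum_congr rfl fun x _ => Finset.sum_comm
      _ = ∑ z, ∑ x, ∑ y, g x y z := Finset.sum_comm
      _ = ∑ z, c z := Finset.sum_congr rfl fun z _ => colsum z
      _ = ∑ z, ∑ x, ∑ y, p x y z := rfl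
      _ = ∑ x, ∑ z, ∑ y, p x y z := Finset.sum_comm
      _ = ∑ x, ∑ y, ∑ z, p x y z := Finset.sum_congr rfl fun x _ => Finset.sum_comm
      _ = 1 := hsum
  have main : ∑ x, ∑ y, ∑ z, (p x y z - g x y z) ≤ ∑ x, ∑ y, ∑ z,
      (p x y z * (-Real.log (a x z)) + p x y z * (-Real.log (b y z))
        - p x y z * (-Real.log (p x y z)) - p x y z * (-Real.log (c z))) :=
    Finset.sum_le_sum fun x _ => Finset.sum_le_sum fun y _ =>
      Finset.sum_le_sum fun z _ => hterm x y z
  have lhs0 : ∑ x, ∑ y, ∑ z, (p x y z - g x y z) = 0 := by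
    simp only [Finset.sum_sub_distrib]
    rw [hsum, hgsum]; ring
  have rhseq : ∑ x, ∑ y, ∑ z,
      (p x y z * (-Real.log (a x z)) + p x y z * (-Real.log (b y z))
        - p x y z * (-Real.log (p x y z)) - p x y z * (-Real.log (c z)))
      = ∑ x, ∑ y, ∑ z, p x y z * (-Real.log (a x z))
        + ∑ x, ∑ y, ∑ z, p x y z * (-Real.log (b y z))
        - ∑ x, ∑ y, ∑ z, p x y z * (-Real.log (p x y z))
        - ∑ x, ∑ y, ∑ z, p x y z * (-Real.log (c z)) := by
    simp only [Finset.sum_add_distrib, Finset.sum_sub_distrib]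
  linarith [main, lhs0, rhseq]

lemma toReal_fiber_sum {Ω B C : Type*} [MeasurableSpace Ω] (μ : Measure Ω) [IsFiniteMeasure μ]
    [Fintype B] [MeasurableSpace C] [MeasurableSingletonClass C] (F : Ω → C) (hF : Measurable F)
    (j : B → C) (hj : Function.Injective j) :
    (μ (F ⁻¹' (Set.range j))).toReal = ∑ b : B, (μ (F ⁻¹' {j b})).toReal := by
  rw [← sum_measure_fiber_comp μ F hF j hj,
    ENNReal.toReal_sum (fun b _ => measure_ne_top μ _)]

lemma condMutualInfo_nonneg {Ω : Type*} [MeasurableSpace Ω] (μ : Measure Ω)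
    [IsProbabilityMeasure μ] {SX SY SR : Type*}
    [Fintype SX] [MeasurableSpace SX] [MeasurableSingletonClass SX]
    [Fintype SY] [MeasurableSpace SY] [MeasurableSingletonClass SY]
    [Fintype SR] [MeasurableSpace SR] [MeasurableSingletonClass SR]
    (X : Ω → SX) (Y : Ω → SY) (Z : Ω → SR)
    (hX : Measurable X) (hY : Measurable Y) (hZ : Measurable Z) :
    0 ≤ condMutualInfo μ X Y Z := by
  classical
  set F : Ω → SX × SY × SR := fun ω => (X ω, Y ω, Z ω) with hF
  have hFm : Measurable F := hX.prodMk (hY.prodMk hZ)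
  set p : SX → SY → SR → ℝ := fun x y z => (μ (F ⁻¹' {(x, y, z)})).toReal with hp
  have hp0 : ∀ x y z, 0 ≤ p x y z := fun x y z => ENNReal.toReal_nonneg
  have hsum : ∑ x, ∑ y, ∑ z, p x y z = 1 := by
    have h1 : ∑ q : SX × SY × SR, (μ (F ⁻¹' {q})).toReal = (μ (F ⁻¹' Set.univ)).toReal := by
      rw [← ENNReal.toReal_sum (fun q _ => measure_ne_top μ _),
        sum_measure_preimage_singleton _ (fun q _ => hFm (measurableSet_singleton q))]
      congr
      simp
    have h2 : ∑ q : SX × SY × SR, (μ (F ⁻¹' {q})).toReal = ∑ x, ∑ y, ∑ z, p x y z := by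
      rw [Fintype.sum_prod_type]
      exact Finset.sum_congr rfl fun x _ => Fintype.sum_prod_type _
    rw [← h2, h1]
    simp
  have hXZ : entropy μ (fun ω => (X ω, Z ω)) = ∑ x, ∑ z, negMulLog (∑ y, p x y z) := by
    rw [entropy, Fintype.sum_prod_type]
    refine Finset.sum_congr rfl fun x _ => Finset.sum_congr rfl fun z _ => ?_
    congr 1
    rw [← toReal_fiber_sum μ F hFm (fun y => (x, y, z)) (fun y y' h => by
      simpa using congrArg (fun q => q.2.1) h)]
    congr 2
    ext ω
    simp [hF, Prod.ext_iff, eq_comm]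
  have hYZ : entropy μ (fun ω => (Y ω, Z ω)) = ∑ y, ∑ z, negMulLog (∑ x, p x y z) := by
    rw [entropy, Fintype.sum_prod_type]
    refine Finset.sum_congr rfl fun y _ => Finset.sum_congr rfl fun z _ => ?_
    congr 1
    rw [← toReal_fiber_sum μ F hFm (fun x => (x, y, z)) (fun x x' h => by
      simpa using congrArg (fun q => q.1) h)]
    congr 2
    ext ω
    simp [hF, Prod.ext_iff, eq_comm]
  have hZe : entropy μ Z = ∑ z, negMulLog (∑ x, ∑ y, p x y z) := by
    rw [entropy]
    refine Finset.sum_congr rfl fun z _ => ?_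
    congr 1
    rw [← Fintype.sum_prod_type (f := fun q : SX × SY => p q.1 q.2 z),
      ← toReal_fiber_sum μ F hFm (fun q : SX × SY => (q.1, q.2, z)) (fun q q' h => by
        have h1 : q.1 = q'.1 := congrArg (fun r : SX × SY × SR => r.1) h
        have h2 : q.2 = q'.2 := congrArg (fun r : SX × SY × SR => r.2.1) h
        exact Prod.ext h1 h2)]
    congr 2
    ext ω
    simp [hF, Prod.ext_iff, eq_comm]
  have hXYZ : entropy μ (fun ω => (X ω, Y ω, Z ω)) = ∑ x, ∑ y, ∑ z, negMulLog (p x y z) := by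
    rw [entropy, Fintype.sum_prod_type]
    exact Finset.sum_congr rfl fun x _ => Fintype.sum_prod_type _
  rw [condMutualInfo, hXZ, hYZ, hZe, hXYZ]
  exact key_ineq p hp0 hsum

lemma mutualInfo_nonneg {Ω : Type*} [MeasurableSpace Ω] (μ : Measure Ω)
    [IsProbabilityMeasure μ] {SX SY : Type*}
    [Fintype SX] [MeasurableSpace SX] [MeasurableSingletonClass SX]
    [Fintype SY] [MeasurableSpace SY] [MeasurableSingletonClass SY]
    (X : Ω → SX) (Y : Ω → SY) (hX : Measurable X) (hY : Measurable Y) :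
    0 ≤ mutualInfo μ X Y := by
  have h := condMutualInfo_nonneg μ X Y (fun _ => (() : Unit)) hX hY measurable_const
  have e1 : entropy μ (fun ω => (X ω, ())) = entropy μ X :=
    entropy_comp_eq μ X _ (fun x => (x, ()))
      (fun a b hab => congrArg Prod.fst hab) (fun ω => rfl)
  have e2 : entropy μ (fun ω => (Y ω, ())) = entropy μ Y :=
    entropy_comp_eq μ Y _ (fun y => (y, ()))
      (fun a b hab => congrArg Prod.fst hab) (fun ω => rfl)
  have e3 : entropy μ (fun ω => (X ω, Y ω, ())) = entropy μ (fun ω => (X ω, Y ω)) :=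
    entropy_comp_eq μ _ _ (fun q : SX × SY => (q.1, q.2, ()))
      (fun a b hab => by
        have h1 : a.1 = b.1 := congrArg (fun r : SX × SY × Unit => r.1) hab
        have h2 : a.2 = b.2 := congrArg (fun r : SX × SY × Unit => r.2.1) hab
        exact Prod.ext h1 h2) (fun ω => rfl)
  have e4 : entropy μ (fun _ : Ω => ()) = 0 := by
    have huniv : (fun _ : Ω => ()) ⁻¹' {()} = Set.univ := by ext ω; simp
    simp [entropy, huniv]
  rw [condMutualInfo, e1, e2, e3, e4] at h
  rw [mutualInfo]
  linarith

theorem stmt_14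
    {Ω : Type*} [MeasurableSpace Ω] (μ : Measure Ω) [IsProbabilityMeasure μ]
    {ST SU SV SW₁ SW₂ SY₁ SY₂ : Type*}
    [Fintype ST] [MeasurableSpace ST] [MeasurableSingletonClass ST] [Fintype SU] [MeasurableSpace SU] [MeasurableSingletonClass SU] [Fintype SV] [MeasurableSpace SV] [MeasurableSingletonClass SV] [Fintype SW₁] [MeasurableSpace SW₁] [MeasurableSingletonClass SW₁] [Fintype SW₂] [MeasurableSpace SW₂] [MeasurableSingletonClass SW₂] [Fintype SY₁] [MeasurableSpace SY₁] [MeasurableSingletonClass SY₁] [Fintype SY₂] [MeasurableSpace SY₂] [MeasurableSingletonClass SY₂]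
    (T : Ω → ST) (U : Ω → SU) (V : Ω → SV) (W₁ : Ω → SW₁) (W₂ : Ω → SW₂) (Y₁ : Ω → SY₁) (Y₂ : Ω → SY₂)
    (hT : Measurable T) (hU : Measurable U) (hV : Measurable V) (hW₁ : Measurable W₁) (hW₂ : Measurable W₂) (hY₁ : Measurable Y₁) (hY₂ : Measurable Y₂)
    (h0 : condMutualInfo μ V Y₂ (fun ω => (T ω, W₂ ω)) = condMutualInfo μ V Y₂ W₂)
    (h1 : condMutualInfo μ W₁ Y₂ (fun ω => (T ω, V ω, W₂ ω)) = condMutualInfo μ W₂ Y₁ (fun ω => (T ω, V ω, W₁ ω)))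
    (h2 : condMutualInfo μ U Y₁ (fun ω => (T ω, V ω, W₁ ω)) = condMutualInfo μ U Y₁ W₁)
    : condMutualInfo μ T Y₂ W₂ + condMutualInfo μ U Y₁ W₁ + condMutualInfo μ V Y₂ W₂ ≤ condMutualInfo μ U Y₁ (fun ω => (T ω, V ω, W₁ ω, W₂ ω)) + mutualInfo μ (fun ω => (T ω, W₁ ω, W₂ ω)) Y₂ + condMutualInfo μ V Y₂ (fun ω => (T ω, W₁ ω, W₂ ω)) := by
  have E1 : entropy μ (fun ω => (U ω, T ω, V ω, W₁ ω, W₂ ω)) = entropy μ (fun ω => (W₂ ω, U ω, T ω, V ω, W₁ ω)) :=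
    entropy_comp_eq μ (fun ω => (W₂ ω, U ω, T ω, V ω, W₁ ω)) _ (fun q => (q.2.1, q.2.2.1, q.2.2.2.1, q.2.2.2.2, q.1))
      (by intro q q' hqq; simp only [Prod.mk.injEq] at hqq; simp [Prod.ext_iff]; tauto)
      (fun ω => rfl)
  have E2 : entropy μ (fun ω => (Y₁ ω, T ω, V ω, W₁ ω, W₂ ω)) = entropy μ (fun ω => (W₂ ω, Y₁ ω, T ω, V ω, W₁ ω)) :=
    entropy_comp_eq μ (fun ω => (W₂ ω, Y₁ ω, T ω, V ω, W₁ ω)) _ (fun q => (q.2.1, q.2.2.1, q.2.2.2.1, q.2.2.2.2, q.1))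
      (by intro q q' hqq; simp only [Prod.mk.injEq] at hqq; simp [Prod.ext_iff]; tauto)
      (fun ω => rfl)
  have E3 : entropy μ (fun ω => (U ω, Y₁ ω, T ω, V ω, W₁ ω, W₂ ω)) = entropy μ (fun ω => (W₂ ω, Y₁ ω, U ω, T ω, V ω, W₁ ω)) :=
    entropy_comp_eq μ (fun ω => (W₂ ω, Y₁ ω, U ω, T ω, V ω, W₁ ω)) _ (fun q => (q.2.2.1, q.2.1, q.2.2.2.1, q.2.2.2.2.1, q.2.2.2.2.2, q.1))
      (by intro q q' hqq; simp only [Prod.mk.injEq] at hqq; simp [Prod.ext_iff]; tauto)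
      (fun ω => rfl)
  have E4 : entropy μ (fun ω => (V ω, T ω, W₁ ω, W₂ ω)) = entropy μ (fun ω => (T ω, V ω, W₁ ω, W₂ ω)) :=
    entropy_comp_eq μ (fun ω => (T ω, V ω, W₁ ω, W₂ ω)) _ (fun q => (q.2.1, q.1, q.2.2))
      (by intro q q' hqq; simp only [Prod.mk.injEq] at hqq; simp [Prod.ext_iff]; tauto)
      (fun ω => rfl)
  have E5 : entropy μ (fun ω => (W₁ ω, T ω, V ω, W₂ ω)) = entropy μ (fun ω => (T ω, V ω, W₁ ω, W₂ ω)) :=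
    entropy_comp_eq μ (fun ω => (T ω, V ω, W₁ ω, W₂ ω)) _ (fun q => (q.2.2.1, q.1, q.2.1, q.2.2.2))
      (by intro q q' hqq; simp only [Prod.mk.injEq] at hqq; simp [Prod.ext_iff]; tauto)
      (fun ω => rfl)
  have E6 : entropy μ (fun ω => (W₂ ω, T ω, V ω, W₁ ω)) = entropy μ (fun ω => (T ω, V ω, W₁ ω, W₂ ω)) :=
    entropy_comp_eq μ (fun ω => (T ω, V ω, W₁ ω, W₂ ω)) _ (fun q => (q.2.2.2, q.1, q.2.1, q.2.2.1))
      (by intro q q' hqq; simp only [Prod.mk.injEq] at hqq; simp [Prod.ext_iff]; tauto)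
      (fun ω => rfl)
  have E7 : entropy μ (fun ω => ((T ω, W₁ ω, W₂ ω), Y₂ ω)) = entropy μ (fun ω => (Y₂ ω, T ω, W₁ ω, W₂ ω)) :=
    entropy_comp_eq μ (fun ω => (Y₂ ω, T ω, W₁ ω, W₂ ω)) _ (fun q => ((q.2.1, q.2.2.1, q.2.2.2), q.1))
      (by intro q q' hqq; simp only [Prod.mk.injEq] at hqq; simp [Prod.ext_iff]; tauto)
      (fun ω => rfl)
  have E8 : entropy μ (fun ω => (V ω, Y₂ ω, T ω, W₁ ω, W₂ ω)) = entropy μ (fun ω => (W₁ ω, Y₂ ω, T ω, V ω, W₂ ω)) :=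
    entropy_comp_eq μ (fun ω => (W₁ ω, Y₂ ω, T ω, V ω, W₂ ω)) _ (fun q => (q.2.2.2.1, q.2.1, q.2.2.1, q.1, q.2.2.2.2))
      (by intro q q' hqq; simp only [Prod.mk.injEq] at hqq; simp [Prod.ext_iff]; tauto)
      (fun ω => rfl)
  have E9 : entropy μ (fun ω => (Y₂ ω, W₂ ω)) = entropy μ (fun ω => (W₂ ω, Y₂ ω)) :=
    entropy_comp_eq μ (fun ω => (W₂ ω, Y₂ ω)) _ (fun q => (q.2, q.1))
      (by intro q q' hqq; simp only [Prod.mk.injEq] at hqq; simp [Prod.ext_iff]; tauto)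
      (fun ω => rfl)
  have E10 : entropy μ (fun ω => (T ω, Y₂ ω, W₂ ω)) = entropy μ (fun ω => (Y₂ ω, T ω, W₂ ω)) :=
    entropy_comp_eq μ (fun ω => (Y₂ ω, T ω, W₂ ω)) _ (fun q => (q.2.1, q.1, q.2.2))
      (by intro q q' hqq; simp only [Prod.mk.injEq] at hqq; simp [Prod.ext_iff]; tauto)
      (fun ω => rfl)
  have E11 : entropy μ (fun ω => (Y₁ ω, U ω, T ω, V ω, W₁ ω)) = entropy μ (fun ω => (U ω, Y₁ ω, T ω, V ω, W₁ ω)) :=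
    entropy_comp_eq μ (fun ω => (U ω, Y₁ ω, T ω, V ω, W₁ ω)) _ (fun q => (q.2.1, q.1, q.2.2))
      (by intro q q' hqq; simp only [Prod.mk.injEq] at hqq; simp [Prod.ext_iff]; tauto)
      (fun ω => rfl)
  have E12 : entropy μ (fun ω => (V ω, T ω, W₂ ω)) = entropy μ (fun ω => (T ω, V ω, W₂ ω)) :=
    entropy_comp_eq μ (fun ω => (T ω, V ω, W₂ ω)) _ (fun q => (q.2.1, q.1, q.2.2))
      (by intro q q' hqq; simp only [Prod.mk.injEq] at hqq; simp [Prod.ext_iff]; tauto)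
      (fun ω => rfl)
  have E13 : entropy μ (fun ω => (V ω, Y₂ ω, T ω, W₂ ω)) = entropy μ (fun ω => (Y₂ ω, T ω, V ω, W₂ ω)) :=
    entropy_comp_eq μ (fun ω => (Y₂ ω, T ω, V ω, W₂ ω)) _ (fun q => (q.2.2.1, q.1, q.2.1, q.2.2.2))
      (by intro q q' hqq; simp only [Prod.mk.injEq] at hqq; simp [Prod.ext_iff]; tauto)
      (fun ω => rfl)
  have n1 : 0 ≤ mutualInfo μ W₂ Y₂ := mutualInfo_nonneg μ W₂ Y₂ hW₂ hY₂
  have n2 : 0 ≤ condMutualInfo μ W₂ Y₁ (fun ω => (U ω, T ω, V ω, W₁ ω)) :=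
    condMutualInfo_nonneg μ W₂ Y₁ _ hW₂ hY₁ (hU.prodMk (hT.prodMk (hV.prodMk hW₁)))
  simp only [condMutualInfo, mutualInfo] at h0 h1 h2 n1 n2 ⊢
  linarith [E1, E2, E3, E4, E5, E6, E7, E8, E9, E10, E11, E12, E13]
end
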